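/- Conversely, if A is a negation algebra (¬¬x = x and ¬ has at most one fixed point) and F = {a} for some a ∈ A with ¬a ≠ a, then F is a deductive filter for the rules {x,¬x}⊢y, {x}⊢¬¬x, {¬¬x}⊢x, and the Suszko congruence of F (the intersection of the Leibniz congruences of all deductive filters containing F) is the identity relation on A. -/
import Mathlib


/-- A negation algebra: an involution with at most one fixed point. -/
def IsNegAlg {A : Type*} (neg : A → A) : Prop :=
  (∀ x, neg (neg x) = x) ∧ ∀ x y, neg x = x → neg y = y → x = y

/-- `G` is a deductive filter of the rules `{x, ¬x} ⊢ y`, `{x} ⊢ ¬¬x`,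
`{¬¬x} ⊢ x` on the ¬-algebra `⟨A, neg⟩`. -/
def NegDedFilter {A : Type*} (neg : A → A) (G : Set A) : Prop :=
  (∀ a c : A, a ∈ G → neg a ∈ G → c ∈ G) ∧
  (∀ a : A, a ∈ G → neg (neg a) ∈ G) ∧
  (∀ a : A, neg (neg a) ∈ G → a ∈ G)

/-- `x` and `y` are related by the Leibniz congruence of `G`: some congruence
of `⟨A, neg⟩` compatible with `G` relates them. -/
def LeibnizRelNeg {A : Type*} (neg : A → A) (G : Set A) (x y : A) : Prop :=
  ∃ θ : A → A → Prop, Equivalence θ ∧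
    (∀ u v, θ u v → θ (neg u) (neg v)) ∧
    (∀ u v, θ u v → u ∈ G → v ∈ G) ∧
    θ x y

/-- if `A` is a negation algebra and `a` is not a fixed point of
`¬`, then `{a}` is a deductive filter, and the Suszko congruence of `{a}` (the
intersection of the Leibniz congruences of all deductive filters containing
`{a}`) is the identity relation on `A`. -/
theorem singleton_filter_suszko_identity
    {A : Type*} (neg : A → A) (h : IsNegAlg neg) (a : A) (ha : neg a ≠ a) :
    NegDedFilter neg ({a} : Set A) ∧
    (∀ x y : A,
      (∀ G : Set A, NegDedFilter neg G → a ∈ G → LeibnizRelNeg neg G x y) →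
      x = y) := by
  obtain ⟨inv, fix⟩ := h
  -- {a} is a filter
  have hsing : NegDedFilter neg ({a} : Set A) := by
    refine ⟨?_, ?_, ?_⟩
    · intro b c hb hnb
      simp only [Set.mem_singleton_iff] at hb hnb
      subst hb
      exact absurd hnb ha
    · intro b hb; rwa [inv]
    · intro b hb; rwa [inv] at hb
  have hpair : ∀ c : A, c ≠ neg a → neg c ≠ c → NegDedFilter neg ({a, c} : Set A) := by
    intro c hc1 hc2
    refine ⟨?_, ?_, ?_⟩
    · intro b d hb hnb
      exfalso
      simp only [Set.mem_insert_iff, Set.mem_singleton_iff] at hb hnb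
      rcases hb with rfl | rfl
      · rcases hnb with h1 | h1
        · exact ha h1
        · exact hc1 h1.symm
      · rcases hnb with h1 | h1
        · exact hc1 (by rw [← h1, inv])
        · exact hc2 h1
    · intro b hb; rwa [inv]
    · intro b hb; rwa [inv] at hb
  refine ⟨hsing, ?_⟩
  intro x y H
  -- helper: if c is "good" and θ is from filter {a,c} then membership transfers
  -- Case 1: x = neg a
  by_cases hx1 : x = neg a
  · obtain ⟨θ, heq, hneg, hcomp, hxy⟩ := H {a} hsing rfl
    have h1 : θ (neg x) (neg y) := hneg x y hxy
    have h2 : θ a (neg y) := by rwa [hx1, inv] at h1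
    have h3 : neg y ∈ ({a} : Set A) := hcomp a (neg y) h2 rfl
    simp only [Set.mem_singleton_iff] at h3
    rw [hx1, ← h3, inv]
  by_cases hy1 : y = neg a
  · obtain ⟨θ, heq, hneg, hcomp, hxy⟩ := H {a} hsing rfl
    have h1 : θ (neg y) (neg x) := hneg y x (heq.symm hxy)
    have h2 : θ a (neg x) := by rwa [hy1, inv] at h1
    have h3 : neg x ∈ ({a} : Set A) := hcomp a (neg x) h2 rfl
    simp only [Set.mem_singleton_iff] at h3
    rw [hy1, ← h3, inv]
  -- Case: x fixed point
  by_cases hx2 : neg x = x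
  · by_cases hy2 : neg y = y
    · exact fix x y hx2 hy2
    · -- y is good: use filter {a, y}
      obtain ⟨θ, heq, hneg, hcomp, hxy⟩ :=
        H {a, y} (hpair y hy1 hy2) (Set.mem_insert a _)
      have hxm : x ∈ ({a, y} : Set A) :=
        hcomp y x (heq.symm hxy) (Set.mem_insert_of_mem _ rfl)
      simp only [Set.mem_insert_iff, Set.mem_singleton_iff] at hxm
      rcases hxm with rfl | rfl
      · exact absurd hx2 ha
      · rfl
  by_cases hy2 : neg y = y
  · -- x is good: use filter {a, x}
    obtain ⟨θ, heq, hneg, hcomp, hxy⟩ :=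
      H {a, x} (hpair x hx1 hx2) (Set.mem_insert a _)
    have hym : y ∈ ({a, x} : Set A) :=
      hcomp x y hxy (Set.mem_insert_of_mem _ rfl)
    simp only [Set.mem_insert_iff, Set.mem_singleton_iff] at hym
    rcases hym with rfl | h
    · exact absurd hy2 ha
    · exact h.symm
  -- both good
  have hyin : y = a ∨ y = x := by
    obtain ⟨θ, heq, hneg, hcomp, hxy⟩ :=
      H {a, x} (hpair x hx1 hx2) (Set.mem_insert a _)
    have := hcomp x y hxy (Set.mem_insert_of_mem _ rfl)
    simpa only [Set.mem_insert_iff, Set.mem_singleton_iff] using this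
  have hxin : x = a ∨ x = y := by
    obtain ⟨θ, heq, hneg, hcomp, hxy⟩ :=
      H {a, y} (hpair y hy1 hy2) (Set.mem_insert a _)
    have := hcomp y x (heq.symm hxy) (Set.mem_insert_of_mem _ rfl)
    simpa only [Set.mem_insert_iff, Set.mem_singleton_iff] using this
  rcases hxin with rfl | h
  · rcases hyin with rfl | h
    · rfl
    · exact h.symm
  · exact h
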